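/- In an undirected graph with unique shortest paths, if a shortest path from x to y intersects a shortest path from u to v, then the set of shared vertices forms a single contiguous subpath: letting a be the first and b the last vertex of u⇝v that lies on x⇝y, the subpath of u⇝v from a to b is also a subpath of x⇝y, and x⇝y and u⇝v share exactly one edge-maximal common subpath. -/

import Mathlib

/-- The weight of a walk in an edge-weighted graph. -/
def walkWeight {V : Type} {G : SimpleGraph V} (w : V → V → ℝ) {a b : V}
    (p : G.Walk a b) : ℝ :=
  (p.darts.map fun d => w d.toProd.1 d.toProd.2).sum

open SimpleGraph

variable {V : Type} {G : SimpleGraph V} (w : V → V → ℝ)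

lemma walkWeight_append {a b c : V} (p : G.Walk a b) (q : G.Walk b c) :
    walkWeight w (p.append q) = walkWeight w p + walkWeight w q := by
  simp [walkWeight, Walk.darts_append]

lemma walkWeight_nonneg (hw : ∀ a b, 0 ≤ w a b) {a b : V} (p : G.Walk a b) :
    0 ≤ walkWeight w p := by
  apply List.sum_nonneg
  intro x hx
  simp only [List.mem_map] at hx
  obtain ⟨d, -, rfl⟩ := hx
  exact hw _ _

lemma walkWeight_cons {a b c : V} (h : G.Adj a b) (p : G.Walk b c) :
    walkWeight w (Walk.cons h p) = w a b + walkWeight w p := by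
  simp [walkWeight, Walk.darts_cons]

lemma walkWeight_reverse (hsymm : ∀ a b, w a b = w b a) {a b : V} (p : G.Walk a b) :
    walkWeight w p.reverse = walkWeight w p := by
  simp only [walkWeight, Walk.darts_reverse, List.map_reverse, List.sum_reverse,
    List.map_map]
  congr 1
  apply List.map_congr_left
  intro d _
  exact (hsymm _ _).symm

lemma exists_path_le (hw : ∀ a b, 0 ≤ w a b) {a b : V} (q : G.Walk a b) :
    ∃ p : G.Walk a b, p.IsPath ∧ walkWeight w p ≤ walkWeight w q := by
  classical
  induction q with
  | nil => exact ⟨.nil, Walk.IsPath.nil, le_refl _⟩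
  | cons h q ih =>
    obtain ⟨p, hp, hple⟩ := ih
    rename_i s s' t
    by_cases hs : s ∈ p.support
    · refine ⟨p.dropUntil s hs, hp.dropUntil hs, ?_⟩
      have hsplit := Walk.take_spec p hs
      have : walkWeight w p = walkWeight w (p.takeUntil s hs) + walkWeight w (p.dropUntil s hs) := by
        rw [← walkWeight_append, hsplit]
      rw [walkWeight_cons]
      nlinarith [walkWeight_nonneg w hw (p.takeUntil s hs), hw s s']
    · refine ⟨.cons h p, hp.cons hs, ?_⟩
      rw [walkWeight_cons, walkWeight_cons]
      linarith

/-- Split a walk at the first vertex satisfying `P`. -/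
lemma split_first (P : V → Prop) :
    ∀ {s t : V} (p : G.Walk s t), (∃ z ∈ p.support, P z) →
    ∃ (a : V) (p1 : G.Walk s a) (p2 : G.Walk a t),
      p = p1.append p2 ∧ P a ∧ ∀ z ∈ p1.support, P z → z = a := by
  intro s t p
  induction p with
  | nil =>
    intro hz
    obtain ⟨z, hz, hPz⟩ := hz
    simp only [Walk.support_nil, List.mem_singleton] at hz
    subst hz
    exact ⟨_, .nil, .nil, rfl, hPz, by simp⟩
  | cons h q ih =>
    intro hz
    rename_i s s' t'
    by_cases hPs : P s
    · exact ⟨s, .nil, .cons h q, rfl, hPs, by simp⟩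
    · obtain ⟨z, hzmem, hPz⟩ := hz
      simp only [Walk.support_cons, List.mem_cons] at hzmem
      rcases hzmem with rfl | hzmem
      · exact absurd hPz hPs
      · obtain ⟨a, p1, p2, heq, hPa, hfirst⟩ := ih ⟨z, hzmem, hPz⟩
        refine ⟨a, .cons h p1, p2, by simp [heq], hPa, ?_⟩
        intro z' hz' hPz'
        simp only [Walk.support_cons, List.mem_cons] at hz'
        rcases hz' with rfl | hz'
        · exact absurd hPz' hPs
        · exact hfirst z' hz' hPz'

/-- Split a walk at the last vertex satisfying `P`. -/
lemma split_last (P : V → Prop) {s t : V} (p : G.Walk s t) (h : ∃ z ∈ p.support, P z) :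
    ∃ (b : V) (p1 : G.Walk s b) (p2 : G.Walk b t),
      p = p1.append p2 ∧ P b ∧ ∀ z ∈ p2.support, P z → z = b := by
  obtain ⟨b, q1, q2, heq, hPb, hlast⟩ := split_first P p.reverse
    (by simpa [Walk.support_reverse] using h)
  refine ⟨b, q2.reverse, q1.reverse, ?_, hPb, ?_⟩
  · have := congrArg Walk.reverse heq
    simpa [Walk.reverse_append] using this
  · intro z hz hPz
    exact hlast z (by simpa [Walk.support_reverse] using hz) hPz

lemma min_left (hw : ∀ a b, 0 ≤ w a b) {s t a : V} (p1 : G.Walk s a) (p2 : G.Walk a t)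
    (hmin : ∀ r : G.Walk s t, r.IsPath → walkWeight w (p1.append p2) ≤ walkWeight w r) :
    ∀ r : G.Walk s a, r.IsPath → walkWeight w p1 ≤ walkWeight w r := by
  intro r hr
  obtain ⟨p', hp', hle⟩ := exists_path_le w hw (r.append p2)
  have h1 := hmin p' hp'
  rw [walkWeight_append] at h1
  rw [walkWeight_append] at hle
  linarith

lemma min_right (hw : ∀ a b, 0 ≤ w a b) {s t a : V} (p1 : G.Walk s a) (p2 : G.Walk a t)
    (hmin : ∀ r : G.Walk s t, r.IsPath → walkWeight w (p1.append p2) ≤ walkWeight w r) :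
    ∀ r : G.Walk a t, r.IsPath → walkWeight w p2 ≤ walkWeight w r := by
  intro r hr
  obtain ⟨p', hp', hle⟩ := exists_path_le w hw (p1.append r)
  have h1 := hmin p' hp'
  rw [walkWeight_append] at h1
  rw [walkWeight_append] at hle
  linarith

lemma min_reverse (hsymm : ∀ a b, w a b = w b a) {a b : V} (p : G.Walk b a)
    (hmin : ∀ r : G.Walk b a, r.IsPath → walkWeight w p ≤ walkWeight w r) :
    ∀ r : G.Walk a b, r.IsPath → walkWeight w p.reverse ≤ walkWeight w r := by
  intro r hr
  rw [walkWeight_reverse w hsymm]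
  calc walkWeight w p ≤ walkWeight w r.reverse := hmin r.reverse hr.reverse
    _ = walkWeight w r := walkWeight_reverse w hsymm r

lemma support_concat' {s a : V} (p : G.Walk s a) : p.support.dropLast ++ [a] = p.support := by
  have h : p.support.reverse = a :: p.reverse.support.tail := by
    rw [← Walk.support_reverse]; exact Walk.support_eq_cons _
  have h2 : p.support = p.reverse.support.tail.reverse ++ [a] := by
    rw [← List.reverse_reverse p.support, h]; simp
  rw [h2]; simp

lemma support_triple {s a b t : V} (p1 : G.Walk s a) (q : G.Walk a b) (p3 : G.Walk b t) :
    (p1.append (q.append p3)).support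
      = p1.support.dropLast ++ q.support ++ p3.support.tail := by
  rw [Walk.support_append, Walk.support_append,
    List.tail_append_of_ne_nil (Walk.support_ne_nil q)]
  rw [← support_concat' p1]
  have : q.support = a :: q.support.tail := Walk.support_eq_cons q
  rw [this]
  simp
  conv_lhs => rw [← support_concat' p1]
  conv_rhs => rw [this]
  simp only [List.append_assoc, List.singleton_append, List.cons_append, List.nil_append]

/-- In an undirected graph with nonnegative weights and unique shortest paths,
if the shortest path x⇝y intersects the shortest path u⇝v, then the shared
vertices form a single contiguous subpath: some nonempty list l is an infix of
the support of u⇝v and (possibly reversed) an infix of the support of x⇝y, and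
l contains exactly the common vertices; i.e., the two shortest paths share
exactly one edge-maximal common subpath. -/
theorem shortest_paths_share_one_subpath {V : Type} (G : SimpleGraph V)
    (w : V → V → ℝ) (hw : ∀ a b, 0 ≤ w a b) (hsymm : ∀ a b, w a b = w b a)
    (husp : ∀ (s t : V) (p q : G.Walk s t), p.IsPath → q.IsPath →
      (∀ r : G.Walk s t, r.IsPath → walkWeight w p ≤ walkWeight w r) →
      (∀ r : G.Walk s t, r.IsPath → walkWeight w q ≤ walkWeight w r) → p = q)
    (u v x y : V) (puv : G.Walk u v) (pxy : G.Walk x y)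
    (hpuv : puv.IsPath)
    (hpuv_min : ∀ r : G.Walk u v, r.IsPath → walkWeight w puv ≤ walkWeight w r)
    (hpxy : pxy.IsPath)
    (hpxy_min : ∀ r : G.Walk x y, r.IsPath → walkWeight w pxy ≤ walkWeight w r)
    (hint : ∃ z : V, z ∈ puv.support ∧ z ∈ pxy.support) :
    ∃ l : List V, l ≠ [] ∧ l <:+: puv.support ∧
      (l <:+: pxy.support ∨ l.reverse <:+: pxy.support) ∧
      ∀ z : V, (z ∈ puv.support ∧ z ∈ pxy.support) ↔ z ∈ l := by
  classical
  obtain ⟨z0, hz01, hz02⟩ := hint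
  obtain ⟨a, p1, p2, heq1, haxy, hfirst⟩ :=
    split_first (fun z => z ∈ pxy.support) puv ⟨z0, hz01, hz02⟩
  obtain ⟨b, q, p3, heq2, hbxy, hlast⟩ :=
    split_last (fun z => z ∈ pxy.support) p2 ⟨a, p2.start_mem_support, haxy⟩
  have heq : puv = p1.append (q.append p3) := by rw [heq1, heq2]
  have hqpath : q.IsPath := ((heq ▸ hpuv).of_append_right).of_append_left
  have hmin_q : ∀ r : G.Walk a b, r.IsPath → walkWeight w q ≤ walkWeight w r :=
    min_left w hw q p3 (min_right w hw p1 _ (fun r hr => by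
      rw [← heq]; exact hpuv_min r hr))
  have hb : b ∈ pxy.support := hbxy
  have hsplit : (pxy.takeUntil b hb).append (pxy.dropUntil b hb) = pxy :=
    Walk.take_spec pxy hb
  have hamem : a ∈ ((pxy.takeUntil b hb).append (pxy.dropUntil b hb)).support := by
    rw [hsplit]; exact haxy
  rw [Walk.mem_support_append_iff] at hamem
  have hmemforward : ∀ z : V, z ∈ puv.support → z ∈ pxy.support → z ∈ q.support := by
    intro z hz1 hz2
    rw [heq, Walk.mem_support_append_iff, Walk.mem_support_append_iff] at hz1
    rcases hz1 with h | h | h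
    · rw [hfirst z h hz2]; exact q.start_mem_support
    · exact h
    · rw [hlast z h hz2]; exact q.end_mem_support
  have hmemuv : ∀ z : V, z ∈ q.support → z ∈ puv.support := by
    intro z hz
    rw [heq, Walk.mem_support_append_iff, Walk.mem_support_append_iff]
    exact Or.inr (Or.inl hz)
  have hinfuv : q.support <:+: puv.support :=
    ⟨p1.support.dropLast, p3.support.tail, by rw [heq, support_triple]⟩
  rcases hamem with ha1 | ha2
  · -- a comes before b on pxy
    set t1 := pxy.takeUntil b hb with ht1
    set t2 := pxy.dropUntil b hb with ht2
    set s1 := t1.takeUntil a ha1 with hs1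
    set s2 := t1.dropUntil a ha1 with hs2
    have hsplit2 : s1.append s2 = t1 := Walk.take_spec t1 ha1
    have heqx : pxy = s1.append (s2.append t2) := by
      rw [← hsplit, ← hsplit2, ← Walk.append_assoc]
    have hs2path : s2.IsPath := ((heqx ▸ hpxy).of_append_right).of_append_left
    have hmin_s2 : ∀ r : G.Walk a b, r.IsPath → walkWeight w s2 ≤ walkWeight w r :=
      min_left w hw s2 t2 (min_right w hw s1 _ (fun r hr => by
        rw [← heqx]; exact hpxy_min r hr))
    have hqs : q = s2 := husp a b q s2 hqpath hs2path hmin_q hmin_s2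
    refine ⟨q.support, Walk.support_ne_nil q, hinfuv,
      Or.inl ⟨s1.support.dropLast, t2.support.tail, by rw [hqs, heqx, support_triple]⟩, ?_⟩
    intro z
    constructor
    · rintro ⟨hz1, hz2⟩; exact hmemforward z hz1 hz2
    · intro hz
      refine ⟨hmemuv z hz, ?_⟩
      rw [hqs] at hz
      rw [heqx, Walk.mem_support_append_iff, Walk.mem_support_append_iff]
      exact Or.inr (Or.inl hz)
  · -- b comes before a on pxy
    set t1 := pxy.takeUntil b hb with ht1
    set t2 := pxy.dropUntil b hb with ht2
    set s1 := t2.takeUntil a ha2 with hs1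
    set s2 := t2.dropUntil a ha2 with hs2
    have hsplit2 : s1.append s2 = t2 := Walk.take_spec t2 ha2
    have heqx : pxy = t1.append (s1.append s2) := by
      rw [← hsplit, ← hsplit2]
    have hs1path : s1.IsPath := ((heqx ▸ hpxy).of_append_right).of_append_left
    have hmin_s1 : ∀ r : G.Walk b a, r.IsPath → walkWeight w s1 ≤ walkWeight w r :=
      min_left w hw s1 s2 (min_right w hw t1 _ (fun r hr => by
        rw [← heqx]; exact hpxy_min r hr))
    have hqs : q = s1.reverse :=
      husp a b q s1.reverse hqpath hs1path.reverse hmin_q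
        (min_reverse w hsymm s1 hmin_s1)
    have hrev : q.support.reverse = s1.support := by
      rw [hqs, Walk.support_reverse, List.reverse_reverse]
    refine ⟨q.support, Walk.support_ne_nil q, hinfuv,
      Or.inr ⟨t1.support.dropLast, s2.support.tail, by rw [hrev, heqx, support_triple]⟩, ?_⟩
    intro z
    constructor
    · rintro ⟨hz1, hz2⟩; exact hmemforward z hz1 hz2
    · intro hz
      refine ⟨hmemuv z hz, ?_⟩
      have hz' : z ∈ s1.support := by rw [← hrev]; simpa using hz
      rw [heqx, Walk.mem_support_append_iff, Walk.mem_support_append_iff]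
      exact Or.inr (Or.inl hz')
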